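/- arXiv:0712.1574 — 2 statements merged into one kernel-verified Lean document; each statement's English description precedes it below -/
import Mathlib

section
/- There exists an absolute constant C > 0 such that for every real y ≥ 2, setting s_y := 1 + 1/log y, one has ∑_{p ≤ y, p prime} (1/p − 1/p^{s_y}) + ∑_{p > y, p prime} 1/p^{s_y} ≤ C. -/
open Finset

lemma theta_le (N : ℕ) :
    ∑ p ∈ (Finset.range (N+1)).filter Nat.Prime, Real.log p ≤ N * Real.log 4 := by
  have h4 := primorial_le_4_pow N
  have h1 : Real.log (primorial N) = ∑ p ∈ (Finset.range (N+1)).filter Nat.Prime, Real.log p := by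
    rw [primorial, Nat.cast_prod, Real.log_prod]
    intro p hp
    have := (Finset.mem_filter.mp hp).2.pos
    positivity
  have h2 : Real.log (primorial N) ≤ Real.log (4 ^ N) := by
    apply Real.log_le_log (by exact_mod_cast (primorial_pos N))
    exact_mod_cast h4
  rw [h1] at h2
  calc _ ≤ Real.log ((4:ℝ) ^ N) := h2
    _ = N * Real.log 4 := by rw [Real.log_pow]

lemma sum_logdiv (N : ℕ) (hN : 1 ≤ N) :
    ∑ p ∈ (Finset.range (N+1)).filter Nat.Prime, Real.log p / p ≤ 4 * Real.log N := by
  induction N using Nat.strong_induction_on with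
  | _ N ih =>
    rcases le_or_gt N 1 with h1 | h1
    · interval_cases N
      · rw [show (Finset.range 2).filter Nat.Prime = ∅ from by decide]
        simp
    · -- N ≥ 2
      set M := N / 2 with hM
      have hM1 : 1 ≤ M := by omega
      have hMN : M < N := by omega
      have hsub : (Finset.range (M+1)).filter Nat.Prime ⊆ (Finset.range (N+1)).filter Nat.Prime := by
        apply Finset.filter_subset_filter
        exact Finset.range_subset_range.mpr (by omega)
      have hsplit := Finset.sum_sdiff (f := fun p : ℕ => Real.log p / p) hsub
      -- block bound
      have hblock : ∑ p ∈ ((Finset.range (N+1)).filter Nat.Prime) \ ((Finset.range (M+1)).filter Nat.Prime),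
          Real.log p / p ≤ 4 * Real.log 2 := by
        have step1 : ∀ p ∈ ((Finset.range (N+1)).filter Nat.Prime) \ ((Finset.range (M+1)).filter Nat.Prime),
            Real.log p / p ≤ 2 / (N+1) * Real.log p := by
          intro p hp
          rw [Finset.mem_sdiff, Finset.mem_filter, Finset.mem_range] at hp
          obtain ⟨⟨hpN, hpp⟩, hnot⟩ := hp
          have hpM : M + 1 ≤ p := by
            by_contra h
            exact hnot (Finset.mem_filter.mpr ⟨Finset.mem_range.mpr (by omega), hpp⟩)
          have hp2 : 2 * p ≥ N + 1 := by omega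
          have hlogp : 0 ≤ Real.log p := Real.log_nonneg (by exact_mod_cast hpp.one_lt.le)
          have hp0 : (0:ℝ) < p := by exact_mod_cast hpp.pos
          have hfrac : (1:ℝ)/p ≤ 2/(N+1) := by
            rw [div_le_div_iff₀ hp0 (by positivity)]
            have : (N:ℝ)+1 ≤ 2*p := by exact_mod_cast hp2
            linarith
          calc Real.log p / p = Real.log p * (1/p) := by ring
            _ ≤ Real.log p * (2/(N+1)) := mul_le_mul_of_nonneg_left hfrac hlogp
            _ = 2/(N+1) * Real.log p := by ring
        calc ∑ p ∈ ((Finset.range (N+1)).filter Nat.Prime) \ ((Finset.range (M+1)).filter Nat.Prime),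
              Real.log p / p
            ≤ ∑ p ∈ ((Finset.range (N+1)).filter Nat.Prime) \ ((Finset.range (M+1)).filter Nat.Prime),
              2 / (N+1) * Real.log p := Finset.sum_le_sum step1
          _ = 2 / (N+1) * ∑ p ∈ ((Finset.range (N+1)).filter Nat.Prime) \ ((Finset.range (M+1)).filter Nat.Prime),
              Real.log p := by rw [Finset.mul_sum]
          _ ≤ 2 / (N+1) * ∑ p ∈ (Finset.range (N+1)).filter Nat.Prime, Real.log p := by
              apply mul_le_mul_of_nonneg_left _ (by positivity)
              apply Finset.sum_le_sum_of_subset_of_nonneg (Finset.sdiff_subset)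
              intro p hp _
              have hpp := (Finset.mem_filter.mp hp).2
              exact Real.log_nonneg (by exact_mod_cast hpp.one_lt.le)
          _ ≤ 2 / (N+1) * (N * Real.log 4) := by
              apply mul_le_mul_of_nonneg_left (theta_le N) (by positivity)
          _ ≤ 4 * Real.log 2 := by
              have h4 : Real.log 4 = 2 * Real.log 2 := by
                rw [show (4:ℝ) = 2^2 by norm_num, Real.log_pow]; push_cast; ring
              rw [h4]
              have hl2 : 0 ≤ Real.log 2 := Real.log_nonneg (by norm_num)
              have hN0 : (0:ℝ) < N + 1 := by positivity
              rw [div_mul_eq_mul_div, div_le_iff₀ hN0]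
              nlinarith
      have hih : ∑ p ∈ (Finset.range (M+1)).filter Nat.Prime, Real.log p / p ≤ 4 * Real.log M :=
        ih M hMN hM1
      have htot : ∑ p ∈ (Finset.range (N+1)).filter Nat.Prime, Real.log p / p
          ≤ 4 * Real.log M + 4 * Real.log 2 := by
        rw [← hsplit]; linarith
      have hfin : 4 * Real.log M + 4 * Real.log 2 ≤ 4 * Real.log N := by
        have : Real.log M + Real.log 2 = Real.log (2 * M) := by
          rw [Real.log_mul (by norm_num) (by positivity), add_comm]
        have h2M : (2 * M : ℝ) ≤ N := by
          have : 2 * M ≤ N := by omega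
          exact_mod_cast this
        have hlog : Real.log (2 * M) ≤ Real.log N := Real.log_le_log (by positivity) h2M
        linarith
      linarith

-- block bound : primes in (M, N] with N ≤ 2M
lemma block_bound (M N : ℕ) (hM : 2 ≤ M) (hNM : N ≤ 2*M) :
    ∑ n ∈ (Finset.range (N+1)).filter (fun n => n.Prime ∧ M < n),
      1/((n:ℝ) * Real.log n ^ 2) ≤ 4 * Real.log 2 / Real.log M ^ 3 := by
  have hM0 : (0:ℝ) < M := by positivity
  have hLM : Real.log 2 ≤ Real.log M := Real.log_le_log (by norm_num) (by exact_mod_cast hM)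
  have hL0 : 0 < Real.log M := lt_of_lt_of_le (Real.log_pos (by norm_num)) hLM
  have step1 : ∀ n ∈ (Finset.range (N+1)).filter (fun n => n.Prime ∧ M < n),
      1/((n:ℝ) * Real.log n ^ 2) ≤ Real.log n / (M * Real.log M ^ 3) := by
    intro n hn
    rw [Finset.mem_filter, Finset.mem_range] at hn
    obtain ⟨hnN, hnp, hMn⟩ := hn
    have hn0 : (0:ℝ) < n := by exact_mod_cast hnp.pos
    have hMn' : (M:ℝ) ≤ n := by exact_mod_cast hMn.le
    have hlogn : Real.log M ≤ Real.log n := Real.log_le_log hM0 hMn'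
    have hlogn0 : 0 < Real.log n := lt_of_lt_of_le hL0 hlogn
    rw [div_le_div_iff₀ (by positivity) (by positivity)]
    have key : (M:ℝ) * Real.log M ^ 3 ≤ n * Real.log n ^ 3 := by
      have h3 : Real.log M ^ 3 ≤ Real.log n ^ 3 := by gcongr
      exact mul_le_mul hMn' h3 (by positivity) hn0.le
    calc (1:ℝ) * (M * Real.log M ^ 3) ≤ n * Real.log n ^ 3 := by linarith
      _ = Real.log n * (n * Real.log n ^ 2) := by ring
  calc ∑ n ∈ (Finset.range (N+1)).filter (fun n => n.Prime ∧ M < n), 1/((n:ℝ) * Real.log n ^ 2)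
      ≤ ∑ n ∈ (Finset.range (N+1)).filter (fun n => n.Prime ∧ M < n),
        Real.log n / (M * Real.log M ^ 3) := Finset.sum_le_sum step1
    _ = (∑ n ∈ (Finset.range (N+1)).filter (fun n => n.Prime ∧ M < n), Real.log n)
        / (M * Real.log M ^ 3) := by rw [Finset.sum_div]
    _ ≤ (∑ n ∈ (Finset.range (N+1)).filter Nat.Prime, Real.log n) / (M * Real.log M ^ 3) := by
        rw [div_le_div_iff_of_pos_right (by positivity)]
        apply Finset.sum_le_sum_of_subset_of_nonneg
        · intro n hn
          rw [Finset.mem_filter] at hn ⊢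
          exact ⟨hn.1, hn.2.1⟩
        · intro n hn _
          exact Real.log_nonneg (by exact_mod_cast (Finset.mem_filter.mp hn).2.one_lt.le)
    _ ≤ (N * Real.log 4) / (M * Real.log M ^ 3) := by
        rw [div_le_div_iff_of_pos_right (by positivity)]
        exact theta_le N
    _ ≤ 4 * Real.log 2 / Real.log M ^ 3 := by
        have h4 : Real.log 4 = 2 * Real.log 2 := by
          rw [show (4:ℝ) = 2^2 by norm_num, Real.log_pow]; push_cast; ring
        have hN2M : (N:ℝ) ≤ 2 * M := by exact_mod_cast hNM
        have hl2 : 0 < Real.log 2 := Real.log_pos (by norm_num)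
        rw [div_le_div_iff₀ (by positivity) (by positivity), h4]
        have := mul_le_mul_of_nonneg_right
          (mul_le_mul_of_nonneg_right hN2M (by positivity : (0:ℝ) ≤ 2*Real.log 2))
          (by positivity : (0:ℝ) ≤ Real.log M ^ 3)
        nlinarith [this]

lemma tail_sum (d : ℕ) : ∀ M N : ℕ, 2 ≤ M → N - M ≤ d →
    ∑ n ∈ (Finset.range (N+1)).filter (fun n => n.Prime ∧ M < n),
      1/((n:ℝ) * Real.log n ^ 2) ≤ 8 / Real.log M ^ 2 := by
  induction d using Nat.strong_induction_on with
  | _ d ih =>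
    intro M N hM hd
    have hM0 : (0:ℝ) < M := by positivity
    have hl2 : 0 < Real.log 2 := Real.log_pos (by norm_num)
    have hLM : Real.log 2 ≤ Real.log M := Real.log_le_log (by norm_num) (by exact_mod_cast hM)
    have hL0 : 0 < Real.log M := lt_of_lt_of_le hl2 hLM
    rcases le_or_gt N (2*M) with hN | hN
    · -- base case
      calc _ ≤ 4 * Real.log 2 / Real.log M ^ 3 := block_bound M N hM hN
        _ ≤ 8 / Real.log M ^ 2 := by
            rw [div_le_div_iff₀ (by positivity) (by positivity)]
            nlinarith [pow_pos hL0 2, hLM]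
    · -- split at 2M
      have hsplit := Finset.sum_filter_add_sum_filter_not
        ((Finset.range (N+1)).filter (fun n => n.Prime ∧ M < n)) (fun n => n ≤ 2*M)
        (fun n => 1/((n:ℝ) * Real.log n ^ 2))
      have he1 : ((Finset.range (N+1)).filter (fun n => n.Prime ∧ M < n)).filter (fun n => n ≤ 2*M)
          = (Finset.range (2*M+1)).filter (fun n => n.Prime ∧ M < n) := by
        ext n
        simp only [Finset.mem_filter, Finset.mem_range]
        constructor
        · rintro ⟨⟨h1, h2, h3⟩, h4⟩; exact ⟨by omega, h2, h3⟩
        · rintro ⟨h1, h2, h3⟩; exact ⟨⟨by omega, h2, h3⟩, by omega⟩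
      have he2 : ((Finset.range (N+1)).filter (fun n => n.Prime ∧ M < n)).filter (fun n => ¬ n ≤ 2*M)
          = (Finset.range (N+1)).filter (fun n => n.Prime ∧ 2*M < n) := by
        ext n
        simp only [Finset.mem_filter, Finset.mem_range]
        constructor
        · rintro ⟨⟨h1, h2, h3⟩, h4⟩; exact ⟨h1, h2, by omega⟩
        · rintro ⟨h1, h2, h3⟩; exact ⟨⟨h1, h2, by omega⟩, by omega⟩
      rw [he1, he2] at hsplit
      have hb : ∑ n ∈ (Finset.range (2*M+1)).filter (fun n => n.Prime ∧ M < n),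
          1/((n:ℝ) * Real.log n ^ 2) ≤ 4 * Real.log 2 / Real.log M ^ 3 :=
        block_bound M (2*M) hM (le_refl _)
      have hrec : ∑ n ∈ (Finset.range (N+1)).filter (fun n => n.Prime ∧ 2*M < n),
          1/((n:ℝ) * Real.log n ^ 2) ≤ 8 / Real.log (2*M : ℕ) ^ 2 := by
        apply ih (N - 2*M) (by omega) (2*M) N (by omega) (le_refl _)
      -- combine
      have hK : Real.log ((2*M : ℕ) : ℝ) = Real.log 2 + Real.log M := by
        push_cast
        rw [Real.log_mul (by norm_num) (by positivity)]
      rw [hK] at hrec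
      have hfin : 4 * Real.log 2 / Real.log M ^ 3 + 8 / (Real.log 2 + Real.log M) ^ 2
          ≤ 8 / Real.log M ^ 2 := by
        set L := Real.log M
        set a := Real.log 2
        have h1 : (0:ℝ) < L ^ 3 := by positivity
        have h2 : (0:ℝ) < (a + L)^2 := by positivity
        rw [div_add_div _ _ (ne_of_gt h1) (ne_of_gt h2), div_le_div_iff₀ (by positivity) (by positivity)]
        have ha2 : a^2 ≤ L^2 := by nlinarith
        have h1 : (0:ℝ) ≤ a*L^2*(L^2-a^2) := by
          apply mul_nonneg (by positivity) (by linarith)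
        have h2 : (0:ℝ) ≤ a*L^4 := by positivity
        nlinarith [h1, h2]
      rw [← hsplit]
      linarith

lemma partA (y : ℝ) (hy : 2 ≤ y) :
    ∑ p ∈ (Finset.Icc 1 ⌊y⌋₊).filter Nat.Prime,
      (1 / (p : ℝ) - 1 / (p : ℝ) ^ (1 + 1 / Real.log y)) ≤ 4 := by
  have hy0 : (0:ℝ) ≤ y := by linarith
  have hly : 0 < Real.log y := Real.log_pos (by linarith)
  have hN2 : 2 ≤ ⌊y⌋₊ := Nat.le_floor (by exact_mod_cast hy)
  set N := ⌊y⌋₊ with hNdef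
  have hset : (Finset.Icc 1 N).filter Nat.Prime = (Finset.range (N+1)).filter Nat.Prime := by
    ext p
    simp only [Finset.mem_filter, Finset.mem_Icc, Finset.mem_range]
    exact ⟨fun ⟨⟨_, h2⟩, hp⟩ => ⟨Nat.lt_succ_of_le h2, hp⟩,
      fun ⟨h1, hp⟩ => ⟨⟨hp.one_lt.le, Nat.lt_succ_iff.mp h1⟩, hp⟩⟩
  rw [hset]
  have hterm : ∀ p ∈ (Finset.range (N+1)).filter Nat.Prime,
      1 / (p : ℝ) - 1 / (p : ℝ) ^ (1 + 1 / Real.log y)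
        ≤ (1 / Real.log y) * (Real.log p / p) := by
    intro p hp
    have hpp := (Finset.mem_filter.mp hp).2
    have hp0 : (0:ℝ) < p := by exact_mod_cast hpp.pos
    have hlp : 0 ≤ Real.log p := Real.log_nonneg (by exact_mod_cast hpp.one_lt.le)
    set t := Real.log p * (1 / Real.log y) with htdef
    have ht : 0 ≤ t := by positivity
    have hrw : (p : ℝ) ^ (1 + 1 / Real.log y) = p * Real.exp t := by
      rw [Real.rpow_add hp0, Real.rpow_one, Real.rpow_def_of_pos hp0]
    rw [hrw]
    have hE : 0 < Real.exp t := Real.exp_pos t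
    have hexp := Real.add_one_le_exp (-t)
    rw [Real.exp_neg] at hexp
    have expand : 1/(p:ℝ) - 1/((p:ℝ) * Real.exp t) = (1/p) * (1 - (Real.exp t)⁻¹) := by
      field_simp
    rw [expand]
    calc (1/(p:ℝ)) * (1 - (Real.exp t)⁻¹) ≤ (1/p) * t := by
          apply mul_le_mul_of_nonneg_left (by linarith) (by positivity)
      _ = (1 / Real.log y) * (Real.log p / p) := by rw [htdef]; ring
  calc ∑ p ∈ (Finset.range (N+1)).filter Nat.Prime,
        (1 / (p : ℝ) - 1 / (p : ℝ) ^ (1 + 1 / Real.log y))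
      ≤ ∑ p ∈ (Finset.range (N+1)).filter Nat.Prime,
        (1 / Real.log y) * (Real.log p / p) := Finset.sum_le_sum hterm
    _ = (1 / Real.log y) * ∑ p ∈ (Finset.range (N+1)).filter Nat.Prime,
        Real.log p / p := by rw [Finset.mul_sum]
    _ ≤ (1 / Real.log y) * (4 * Real.log N) := by
        apply mul_le_mul_of_nonneg_left (sum_logdiv N (by omega)) (by positivity)
    _ ≤ (1 / Real.log y) * (4 * Real.log y) := by
        apply mul_le_mul_of_nonneg_left _ (by positivity)
        have h1 : (N:ℝ) ≤ y := Nat.floor_le hy0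
        have := Real.log_le_log (by positivity : (0:ℝ) < N) h1
        linarith
    _ = 4 := by field_simp

lemma partB (y : ℝ) (hy : 2 ≤ y) :
    (∑' p : Nat.Primes,
      if y < ((p : ℕ) : ℝ) then 1 / ((p : ℕ) : ℝ) ^ (1 + 1 / Real.log y) else 0) ≤ 128 := by
  have hy0 : (0:ℝ) ≤ y := by linarith
  have hly : 0 < Real.log y := Real.log_pos (by linarith)
  have hM2 : 2 ≤ ⌊y⌋₊ := Nat.le_floor (by exact_mod_cast hy)
  set M := ⌊y⌋₊ with hMdef
  have hLM : Real.log y / 2 ≤ Real.log M := by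
    have hl2 : 0 < Real.log 2 := Real.log_pos (by norm_num)
    have h2M : Real.log 2 ≤ Real.log M := Real.log_le_log (by norm_num) (by exact_mod_cast hM2)
    rcases le_or_gt y 4 with h4 | h4
    · have : Real.log y ≤ Real.log 4 := Real.log_le_log (by linarith) h4
      have h42 : Real.log 4 = 2 * Real.log 2 := by
        rw [show (4:ℝ) = 2^2 by norm_num, Real.log_pow]; push_cast; ring
      linarith
    · have hfl : y - 1 < (M:ℝ) := by exact_mod_cast Nat.sub_one_lt_floor y
      have hy2 : y / 2 ≤ y - 1 := by linarith
      have : Real.log (y/2) ≤ Real.log M := Real.log_le_log (by linarith) (by linarith)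
      have hld : Real.log (y/2) = Real.log y - Real.log 2 := by
        rw [Real.log_div (by linarith) (by norm_num)]
      have h4y : Real.log 4 ≤ Real.log y := Real.log_le_log (by norm_num) (by linarith)
      have h42 : Real.log 4 = 2 * Real.log 2 := by
        rw [show (4:ℝ) = 2^2 by norm_num, Real.log_pow]; push_cast; ring
      linarith
  apply tsum_le_of_sum_le' (by norm_num)
  intro u
  classical
  set v := u.image (fun p : Nat.Primes => (p : ℕ)) with hvdef
  have himg : ∑ p ∈ u, (if y < ((p : ℕ) : ℝ) then 1 / ((p : ℕ) : ℝ) ^ (1 + 1 / Real.log y) else 0)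
      = ∑ n ∈ v, (if y < (n : ℝ) then 1 / (n : ℝ) ^ (1 + 1 / Real.log y) else 0) := by
    rw [hvdef, Finset.sum_image]
    intro a _ b _ hab
    exact Nat.Primes.coe_nat_injective hab
  rw [himg]
  set Nv := v.sup id with hNdef
  have hfil : ∑ n ∈ v, (if y < (n : ℝ) then 1 / (n : ℝ) ^ (1 + 1 / Real.log y) else 0)
      = ∑ n ∈ v.filter (fun n => M < n), (if y < (n : ℝ) then 1 / (n : ℝ) ^ (1 + 1 / Real.log y) else 0) := by
    rw [Finset.sum_filter_of_ne]
    intro n _ hne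
    have hyn : y < (n : ℝ) := by
      by_contra h
      exact hne (if_neg h)
    exact (Nat.floor_lt hy0).mpr hyn
  rw [hfil]
  have hstep : ∀ n ∈ v.filter (fun n => M < n),
      (if y < (n : ℝ) then 1 / (n : ℝ) ^ (1 + 1 / Real.log y) else 0)
        ≤ 4 * Real.log y ^ 2 * (1 / ((n:ℝ) * Real.log n ^ 2)) := by
    intro n hn
    rw [Finset.mem_filter] at hn
    obtain ⟨hnv, hMn⟩ := hn
    have hyn : y < (n : ℝ) := (Nat.floor_lt hy0).mp hMn
    have hn0 : (0:ℝ) < n := by linarith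
    have hln : 0 < Real.log n := Real.log_pos (by linarith)
    rw [if_pos hyn]
    set t := Real.log n * (1 / Real.log y) with htdef
    have ht : 0 < t := by positivity
    have hrw : (n : ℝ) ^ (1 + 1 / Real.log y) = n * Real.exp t := by
      rw [Real.rpow_add hn0, Real.rpow_one, Real.rpow_def_of_pos hn0]
    rw [hrw]
    -- exp t ≥ t^2/4
    have hexp : t^2 / 4 ≤ Real.exp t := by
      have h1 : t/2 + 1 ≤ Real.exp (t/2) := Real.add_one_le_exp (t/2)
      have h2 : Real.exp (t/2) * Real.exp (t/2) = Real.exp t := by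
        rw [← Real.exp_add]; ring_nf
      nlinarith [Real.exp_pos (t/2), sq_nonneg (t/2)]
    have hE : 0 < Real.exp t := Real.exp_pos t
    have hkey : 1 / ((n:ℝ) * Real.exp t) ≤ 4 / ((n:ℝ) * t^2) := by
      rw [div_le_div_iff₀ (by positivity) (by positivity)]
      nlinarith [hn0, hexp, ht]
    calc 1 / ((n:ℝ) * Real.exp t) ≤ 4 / ((n:ℝ) * t^2) := hkey
      _ = 4 * Real.log y ^ 2 * (1 / ((n:ℝ) * Real.log n ^ 2)) := by
          rw [htdef]
          field_simp
  calc ∑ n ∈ v.filter (fun n => M < n), (if y < (n : ℝ) then 1 / (n : ℝ) ^ (1 + 1 / Real.log y) else 0)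
      ≤ ∑ n ∈ v.filter (fun n => M < n), 4 * Real.log y ^ 2 * (1 / ((n:ℝ) * Real.log n ^ 2)) :=
        Finset.sum_le_sum hstep
    _ ≤ ∑ n ∈ (Finset.range (Nv+1)).filter (fun n => n.Prime ∧ M < n),
        4 * Real.log y ^ 2 * (1 / ((n:ℝ) * Real.log n ^ 2)) := by
        apply Finset.sum_le_sum_of_subset_of_nonneg
        · intro n hn
          rw [Finset.mem_filter] at hn
          obtain ⟨hnv, hMn⟩ := hn
          rw [Finset.mem_filter, Finset.mem_range]
          obtain ⟨p, _, rfl⟩ := Finset.mem_image.mp hnv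
          refine ⟨Nat.lt_succ_of_le ?_, p.2, hMn⟩
          exact Finset.le_sup (f := id) hnv
        · intro n hn _
          have hnp := (Finset.mem_filter.mp hn).2.1
          have hn1 : (1:ℝ) < n := by exact_mod_cast hnp.one_lt
          have hln : 0 < Real.log n := Real.log_pos hn1
          positivity
    _ = 4 * Real.log y ^ 2 * ∑ n ∈ (Finset.range (Nv+1)).filter (fun n => n.Prime ∧ M < n),
        (1 / ((n:ℝ) * Real.log n ^ 2)) := by rw [Finset.mul_sum]
    _ ≤ 4 * Real.log y ^ 2 * (8 / Real.log M ^ 2) := by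
        apply mul_le_mul_of_nonneg_left (tail_sum (Nv - M) M Nv hM2 (le_refl _)) (by positivity)
    _ ≤ 4 * Real.log y ^ 2 * (32 / Real.log y ^ 2) := by
        apply mul_le_mul_of_nonneg_left _ (by positivity)
        have hM0 : 0 < Real.log M :=
          Real.log_pos (by exact_mod_cast (by omega : 1 < M))
        have hLM2 : Real.log y ^ 2 ≤ 4 * Real.log M ^ 2 := by nlinarith [hly]
        rw [div_le_div_iff₀ (by positivity) (by positivity)]
        nlinarith [hLM2]
    _ = 128 := by field_simp; ring

/-- **Prime-sum estimate in the proof of Lemma 3** (Goldmakher): There is an absolute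
constant `C > 0` such that for every real `y ≥ 2`, with `s_y = 1 + 1/log y`,
`∑_{p ≤ y} (1/p − 1/p^{s_y}) + ∑_{p > y} 1/p^{s_y} ≤ C`. -/
theorem prime_sum_sy_bounded :
    ∃ C : ℝ, 0 < C ∧
      ∀ y : ℝ, 2 ≤ y →
        (∑ p ∈ (Finset.Icc 1 ⌊y⌋₊).filter Nat.Prime,
            (1 / (p : ℝ) - 1 / (p : ℝ) ^ (1 + 1 / Real.log y))) +
          (∑' p : Nat.Primes,
            if y < ((p : ℕ) : ℝ) then 1 / ((p : ℕ) : ℝ) ^ (1 + 1 / Real.log y) else 0) ≤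
        C := by
  refine ⟨200, by norm_num, fun y hy => ?_⟩
  have hA := partA y hy
  have hB := partB y hy
  linarith
end

section
/- For any Dirichlet characters χ₁, χ₂, ψ₁, ψ₂ (with arbitrary moduli) and any real y ≥ 2, the triangle inequality 𝔻(χ₁, ψ₁; y) + 𝔻(χ₂, ψ₂; y) ≥ 𝔻(χ₁χ₂, ψ₁ψ₂; y) holds, where products of characters are taken pointwise (as characters modulo the lcm of the respective moduli). -/
open Finset Real


private lemma gs_sq_le_one_of_norm (z : ℂ) (hz : ‖z‖ ≤ 1) : z.re ^ 2 + z.im ^ 2 ≤ 1 := by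
  have := Complex.sq_norm z
  rw [Complex.normSq_apply] at this
  nlinarith [norm_nonneg z]

private lemma gs_key_pt (z w : ℂ) (hz : ‖z‖ ≤ 1) (hw : ‖w‖ ≤ 1) :
    1 - (z * w).re ≤ (Real.sqrt (1 - z.re) + Real.sqrt (1 - w.re)) ^ 2 := by
  have hz2 := gs_sq_le_one_of_norm z hz
  have hw2 := gs_sq_le_one_of_norm w hw
  have hzr : z.re ≤ 1 := by nlinarith [sq_nonneg z.im]
  have hwr : w.re ≤ 1 := by nlinarith [sq_nonneg w.im]
  set s := Real.sqrt (1 - z.re) with hs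
  set t := Real.sqrt (1 - w.re) with ht
  have hs0 : 0 ≤ s := Real.sqrt_nonneg _
  have ht0 : 0 ≤ t := Real.sqrt_nonneg _
  have hss : s ^ 2 = 1 - z.re := Real.sq_sqrt (by linarith)
  have htt : t ^ 2 = 1 - w.re := Real.sq_sqrt (by linarith)
  have hb : z.im ^ 2 ≤ 2 * s ^ 2 := by nlinarith
  have hd : w.im ^ 2 ≤ 2 * t ^ 2 := by nlinarith
  have hbd : z.im * w.im ≤ 2 * (s * t) := by
    nlinarith [sq_nonneg (z.im * w.im - 2 * s * t), sq_nonneg (z.im - w.im),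
      sq_nonneg (z.im + w.im), mul_nonneg hs0 ht0, sq_nonneg (s - t), sq_nonneg (s*t)]
  rw [Complex.mul_re]
  nlinarith [mul_nonneg hs0 ht0, sq_nonneg (s*t)]

private lemma gs_sqrt_sum_le {ι : Type*} (s : Finset ι) (f g h : ι → ℝ)
    (hf : ∀ i, 0 ≤ f i) (hg : ∀ i, 0 ≤ g i)
    (hh : ∀ i ∈ s, h i ≤ (Real.sqrt (f i) + Real.sqrt (g i)) ^ 2) :
    Real.sqrt (∑ i ∈ s, h i) ≤ Real.sqrt (∑ i ∈ s, f i) + Real.sqrt (∑ i ∈ s, g i) := by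
  have h1 : ∑ i ∈ s, h i ≤ ∑ i ∈ s, (Real.sqrt (f i) + Real.sqrt (g i)) ^ 2 :=
    Finset.sum_le_sum hh
  have h2 : ∑ i ∈ s, (Real.sqrt (f i) + Real.sqrt (g i)) ^ 2
      = ∑ i ∈ s, f i + 2 * ∑ i ∈ s, Real.sqrt (f i) * Real.sqrt (g i) + ∑ i ∈ s, g i := by
    rw [Finset.sum_congr rfl (fun i (_ : i ∈ s) => show _ = f i + 2 * (Real.sqrt (f i) * Real.sqrt (g i)) + g i by
      rw [add_sq, Real.sq_sqrt (hf i), Real.sq_sqrt (hg i)]; ring),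
      Finset.sum_add_distrib, Finset.sum_add_distrib, ← Finset.mul_sum]
  have h3 := Real.sum_sqrt_mul_sqrt_le s hf hg
  have hF : 0 ≤ ∑ i ∈ s, f i := Finset.sum_nonneg fun i _ => hf i
  have hG : 0 ≤ ∑ i ∈ s, g i := Finset.sum_nonneg fun i _ => hg i
  have h4 : ∑ i ∈ s, h i ≤ (Real.sqrt (∑ i ∈ s, f i) + Real.sqrt (∑ i ∈ s, g i)) ^ 2 := by
    rw [add_sq, Real.sq_sqrt hF, Real.sq_sqrt hG]
    linarith
  calc Real.sqrt (∑ i ∈ s, h i)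
      ≤ Real.sqrt ((Real.sqrt (∑ i ∈ s, f i) + Real.sqrt (∑ i ∈ s, g i)) ^ 2) :=
        Real.sqrt_le_sqrt h4
    _ = _ := Real.sqrt_sq (by positivity)

private lemma gs_prod_apply {q₁ q₂ : ℕ} (χ₁ : DirichletCharacter ℂ q₁)
    (χ₂ : DirichletCharacter ℂ q₂) {p : ℕ} (hp : p.Prime) :
    (DirichletCharacter.changeLevel (Nat.dvd_lcm_left q₁ q₂) χ₁ *
      DirichletCharacter.changeLevel (Nat.dvd_lcm_right q₁ q₂) χ₂) (p : ZMod (Nat.lcm q₁ q₂))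
      = χ₁ (p : ZMod q₁) * χ₂ (p : ZMod q₂) := by
  by_cases h : IsUnit (p : ZMod (Nat.lcm q₁ q₂))
  · obtain ⟨u, hu⟩ := h
    rw [MulChar.mul_apply, ← hu,
      DirichletCharacter.changeLevel_eq_cast_of_dvd,
      DirichletCharacter.changeLevel_eq_cast_of_dvd, hu,
      ZMod.cast_natCast (Nat.dvd_lcm_left q₁ q₂),
      ZMod.cast_natCast (Nat.dvd_lcm_right q₁ q₂)]
  · rw [MulChar.map_nonunit _ h]
    have hdvd : p ∣ Nat.lcm q₁ q₂ := by
      by_contra hd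
      exact h ((ZMod.isUnit_prime_iff_not_dvd hp).mpr hd)
    have : p ∣ q₁ * q₂ := hdvd.trans (Nat.lcm_dvd_mul q₁ q₂)
    rcases (Nat.Prime.dvd_mul hp).mp this with h1 | h1
    · rw [MulChar.map_nonunit χ₁ (fun hu => ((ZMod.isUnit_prime_iff_not_dvd hp).mp hu) h1),
        zero_mul]
    · rw [MulChar.map_nonunit χ₂ (fun hu => ((ZMod.isUnit_prime_iff_not_dvd hp).mp hu) h1),
        mul_zero]

private lemma gs_norm_zw {q m : ℕ} (χ : DirichletCharacter ℂ q) (ψ : DirichletCharacter ℂ m)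
    (p : ℕ) : ‖χ (p : ZMod q) * (starRingEnd ℂ) (ψ (p : ZMod m))‖ ≤ 1 := by
  rw [norm_mul, RingHomIsometric.norm_map]
  exact mul_le_one₀ (χ.norm_le_one _) (norm_nonneg _) (ψ.norm_le_one _)


/-- The Granville–Soundararajan "distance" between Dirichlet characters `χ` mod `q` and
`ψ` mod `m` up to `y`: `𝔻(χ,ψ;y) = (∑_{p ≤ y} (1 − Re(χ(p) conj(ψ(p))))/p)^{1/2}`. -/
noncomputable def gsDist {q m : ℕ} (χ : DirichletCharacter ℂ q)
    (ψ : DirichletCharacter ℂ m) (y : ℝ) : ℝ :=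
  Real.sqrt (∑ p ∈ (Finset.Icc 1 ⌊y⌋₊).filter Nat.Prime,
    (1 - (χ (p : ZMod q) * (starRingEnd ℂ) (ψ (p : ZMod m))).re) / (p : ℝ))

/-- **Triangle inequality for the Granville–Soundararajan distance**: for Dirichlet
characters `χ₁, χ₂, ψ₁, ψ₂` (arbitrary moduli) and any real `y ≥ 2`,
`𝔻(χ₁,ψ₁;y) + 𝔻(χ₂,ψ₂;y) ≥ 𝔻(χ₁χ₂, ψ₁ψ₂; y)`, where products of characters are taken
modulo the lcm of the respective moduli. -/
theorem gsDist_triangle (q₁ q₂ m₁ m₂ : ℕ)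
    (χ₁ : DirichletCharacter ℂ q₁) (χ₂ : DirichletCharacter ℂ q₂)
    (ψ₁ : DirichletCharacter ℂ m₁) (ψ₂ : DirichletCharacter ℂ m₂)
    (y : ℝ) (hy : 2 ≤ y) :
    gsDist
        (DirichletCharacter.changeLevel (Nat.dvd_lcm_left q₁ q₂) χ₁ *
          DirichletCharacter.changeLevel (Nat.dvd_lcm_right q₁ q₂) χ₂)
        (DirichletCharacter.changeLevel (Nat.dvd_lcm_left m₁ m₂) ψ₁ *
          DirichletCharacter.changeLevel (Nat.dvd_lcm_right m₁ m₂) ψ₂) y ≤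
      gsDist χ₁ ψ₁ y + gsDist χ₂ ψ₂ y := by
  unfold gsDist
  set z : ℕ → ℂ := fun p => χ₁ (p : ZMod q₁) * (starRingEnd ℂ) (ψ₁ (p : ZMod m₁)) with hz
  set w : ℕ → ℂ := fun p => χ₂ (p : ZMod q₂) * (starRingEnd ℂ) (ψ₂ (p : ZMod m₂)) with hw
  have hn : ∀ (a m : ℕ) (χ : DirichletCharacter ℂ a) (ψ : DirichletCharacter ℂ m) (p : ℕ),
      0 ≤ (1 - (χ (p : ZMod a) * (starRingEnd ℂ) (ψ (p : ZMod m))).re) / (p : ℝ) := by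
    intro a m χ ψ p
    apply div_nonneg _ (Nat.cast_nonneg p)
    have := (Complex.abs_re_le_norm (χ (p : ZMod a) * (starRingEnd ℂ) (ψ (p : ZMod m)))).trans
      (gs_norm_zw χ ψ p)
    have := abs_le.mp this
    linarith [this.2]
  apply gs_sqrt_sum_le _ _ _ _ (hn _ _ χ₁ ψ₁) (hn _ _ χ₂ ψ₂)
  intro p hp
  have hpp : p.Prime := (Finset.mem_filter.mp hp).2
  have hp0 : (0:ℝ) < (p : ℝ) := by exact_mod_cast hpp.pos
  have hval : ((DirichletCharacter.changeLevel (Nat.dvd_lcm_left q₁ q₂) χ₁ *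
          DirichletCharacter.changeLevel (Nat.dvd_lcm_right q₁ q₂) χ₂) (p : ZMod (Nat.lcm q₁ q₂)) *
        (starRingEnd ℂ) ((DirichletCharacter.changeLevel (Nat.dvd_lcm_left m₁ m₂) ψ₁ *
          DirichletCharacter.changeLevel (Nat.dvd_lcm_right m₁ m₂) ψ₂) (p : ZMod (Nat.lcm m₁ m₂))))
      = z p * w p := by
    rw [gs_prod_apply χ₁ χ₂ hpp, gs_prod_apply ψ₁ ψ₂ hpp, map_mul, hz, hw]
    ring
  rw [hval]
  have h1 : 1 - (z p * w p).re ≤ (Real.sqrt (1 - (z p).re) + Real.sqrt (1 - (w p).re)) ^ 2 :=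
    gs_key_pt _ _ (gs_norm_zw χ₁ ψ₁ p) (gs_norm_zw χ₂ ψ₂ p)
  have hz1 : (z p).re ≤ 1 := by
    have := abs_le.mp ((Complex.abs_re_le_norm (z p)).trans (gs_norm_zw χ₁ ψ₁ p)); linarith [this.2]
  have hw1 : (w p).re ≤ 1 := by
    have := abs_le.mp ((Complex.abs_re_le_norm (w p)).trans (gs_norm_zw χ₂ ψ₂ p)); linarith [this.2]
  have hdiv : (Real.sqrt ((1 - (z p).re) / p) + Real.sqrt ((1 - (w p).re) / p)) ^ 2
      = (Real.sqrt (1 - (z p).re) + Real.sqrt (1 - (w p).re)) ^ 2 / (p : ℝ) := by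
    rw [Real.sqrt_div (by linarith), Real.sqrt_div (by linarith), ← add_div, div_pow,
      Real.sq_sqrt hp0.le]
  rw [hdiv]
  gcongr
end
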